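/- arXiv:math/0603201 — 4 statements merged into one kernel-verified Lean document; each statement's English description precedes it below -/
import Mathlib

section
/- A list of positive real numbers b_1, ..., b_d is not lopsided (i.e. no b_i exceeds the sum of the others) if and only if there exist complex numbers φ_1, ..., φ_d, each of absolute value 1, such that φ_1 b_1 + ... + φ_d b_d = 0. -/
lemma tri (x y z : ℝ) (hx : 0 ≤ x) (hy : 0 ≤ y) (hz : 0 ≤ z)
    (h1 : x ≤ y + z) (h2 : y ≤ x + z) (h3 : z ≤ x + y) :
    ∃ u v w : ℂ, ‖u‖ = 1 ∧ ‖v‖ = 1 ∧ ‖w‖ = 1 ∧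
      u * x + v * y + w * z = 0 := by
  rcases eq_or_lt_of_le hx with hx0 | hx
  · -- x = 0, then y = z
    have hyz : y = z := le_antisymm (by linarith) (by linarith)
    exact ⟨1, 1, -1, by simp, by simp, by simp, by rw [← hx0, hyz]; push_cast; ring⟩
  rcases eq_or_lt_of_le hy with hy0 | hy
  · have hxz : x = z := le_antisymm (by linarith) (by linarith)
    exact ⟨1, 1, -1, by simp, by simp, by simp, by rw [← hy0, hxz]; push_cast; ring⟩
  rcases eq_or_lt_of_le hz with hz0 | hz
  · have hxy : x = y := le_antisymm (by linarith) (by linarith)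
    exact ⟨1, -1, 1, by simp, by simp, by simp, by rw [← hz0, hxy]; push_cast; ring⟩
  -- all positive
  set c : ℝ := (x^2 - y^2 - z^2) / (2*y*z) with hc
  have hyz : (0:ℝ) < 2*y*z := by positivity
  have hc1 : c ≤ 1 := by
    rw [hc, div_le_one hyz]
    nlinarith [sq_nonneg (x - y - z)]
  have hc2 : -1 ≤ c := by
    rw [hc, le_div_iff₀ hyz]
    nlinarith [sq_nonneg (x + y - z), sq_nonneg (x - y + z)]
  have hcsq : 0 ≤ 1 - c^2 := by nlinarith
  set s : ℝ := Real.sqrt (1 - c^2) with hs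
  have hssq : s^2 = 1 - c^2 := Real.sq_sqrt hcsq
  set v : ℂ := ⟨c, s⟩ with hv
  have hvabs : ‖v‖ = 1 := by
    rw [Complex.norm_def, Complex.normSq_mk]
    rw [show c * c + s * s = 1 by nlinarith]
    exact Real.sqrt_one
  set t : ℂ := (y : ℂ) + (z : ℂ) * v with ht
  have htre : t.re = y + z * c := by simp [ht, hv, Complex.add_re, Complex.mul_re]
  have htim : t.im = z * s := by simp [ht, hv, Complex.add_im, Complex.mul_im]
  have htabs : ‖t‖ = x := by
    rw [Complex.norm_def, Complex.normSq_apply, htre, htim]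
    rw [show (y + z*c) * (y + z*c) + z*s*(z*s) = x^2 by
      have h2c : 2*y*z*c = x^2 - y^2 - z^2 := by
        rw [hc]; field_simp
      nlinarith]
    exact Real.sqrt_sq hx.le
  refine ⟨-t / x, 1, v, ?_, by simp, hvabs, ?_⟩
  · rw [norm_div, norm_neg, htabs]
    simp [Complex.norm_real, abs_of_pos hx, div_self hx.ne']
  · have hx0 : (x : ℂ) ≠ 0 := by exact_mod_cast hx.ne'
    field_simp [ht]
    ring

/-- A list of positive reals is not lopsided iff there exist unit-modulus complex
phases making the weighted sum vanish. -/
theorem stmt0 (d : ℕ) (b : Fin d → ℝ) (hb : ∀ i, 0 < b i) :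
    (¬ ∃ i, b i > ∑ j ∈ Finset.univ.erase i, b j) ↔
    ∃ φ : Fin d → ℂ, (∀ i, ‖φ i‖ = 1) ∧ ∑ i, φ i * (b i : ℂ) = 0 := by
  classical
  constructor
  · intro h
    push_neg at h
    set S : ℝ := ∑ i, b i with hS
    have hS0 : 0 ≤ S := Finset.sum_nonneg fun i _ => (hb i).le
    have hhalf : ∀ i, b i ≤ S / 2 := by
      intro i
      have := h i
      have herase : b i + ∑ j ∈ Finset.univ.erase i, b j = S := by
        rw [hS, Finset.add_sum_erase _ _ (Finset.mem_univ i)]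
      linarith
    set T : ℕ → ℝ := fun k => ∑ i ∈ Finset.univ.filter (fun i : Fin d => (i:ℕ) < k), b i with hT
    set k : ℕ := Nat.findGreatest (fun k => T k ≤ S / 2) d with hk
    have hkd : k ≤ d := Nat.findGreatest_le d
    have hPk : T k ≤ S / 2 := by
      rcases Nat.eq_zero_or_pos k with h0 | h0
      · rw [h0]
        have : Finset.univ.filter (fun i : Fin d => (i:ℕ) < 0) = ∅ := by
          apply Finset.filter_false_of_mem; intro i _; omega
        simp [hT, this]; linarith
      · have hP0 : T 0 ≤ S / 2 := by
          have : Finset.univ.filter (fun i : Fin d => (i:ℕ) < 0) = ∅ := by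
            apply Finset.filter_false_of_mem; intro i _; omega
          simp only [hT, this, Finset.sum_empty]; linarith
        have := Nat.findGreatest_spec (P := fun k => T k ≤ S / 2) (n := d)
          (Nat.zero_le d) hP0
        rwa [← hk] at this
    -- the three groups
    set s1 := Finset.univ.filter (fun i : Fin d => (i:ℕ) < k) with hs1
    set s2 := Finset.univ.filter (fun i : Fin d => (i:ℕ) = k) with hs2
    set s3 := Finset.univ.filter (fun i : Fin d => k < (i:ℕ)) with hs3
    set x : ℝ := ∑ i ∈ s1, b i with hxdef
    set y : ℝ := ∑ i ∈ s2, b i with hydef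
    set z : ℝ := ∑ i ∈ s3, b i with hzdef
    have hsplit : ∀ {M : Type} [AddCommMonoid M] (f : Fin d → M),
        ∑ i, f i = ∑ i ∈ s1, f i + ∑ i ∈ s2, f i + ∑ i ∈ s3, f i := by
      intro M _ f
      rw [← Finset.sum_filter_add_sum_filter_not Finset.univ (fun i : Fin d => (i:ℕ) < k) f]
      rw [← Finset.sum_filter_add_sum_filter_not
        (Finset.univ.filter (fun i : Fin d => ¬ (i:ℕ) < k)) (fun i : Fin d => (i:ℕ) = k) f]
      rw [Finset.filter_filter, Finset.filter_filter]
      rw [add_assoc]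
      congr 2
      · refine Finset.sum_congr ?_ (fun _ _ => rfl)
        ext i; simp only [hs2, Finset.mem_filter, Finset.mem_univ, true_and]; omega
      · refine Finset.sum_congr ?_ (fun _ _ => rfl)
        ext i; simp only [hs3, Finset.mem_filter, Finset.mem_univ, true_and]; omega
    have hxyz : x + y + z = S := (hsplit b).symm
    have hx0 : 0 ≤ x := Finset.sum_nonneg fun i _ => (hb i).le
    have hy0 : 0 ≤ y := Finset.sum_nonneg fun i _ => (hb i).le
    have hz0 : 0 ≤ z := Finset.sum_nonneg fun i _ => (hb i).le
    have hxS : x ≤ S / 2 := hPk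
    have hyS : y ≤ S / 2 := by
      rcases lt_or_ge k d with hkd' | hkd'
      · have : s2 = {⟨k, hkd'⟩} := by
          ext i; simp only [hs2, Finset.mem_filter, Finset.mem_univ, true_and,
            Finset.mem_singleton]
          constructor
          · intro hi; exact Fin.ext hi
          · intro hi; rw [hi]
        rw [hydef, this, Finset.sum_singleton]
        exact hhalf _
      · have : s2 = ∅ := by
          apply Finset.filter_false_of_mem; intro i _
          have := i.isLt; omega
        rw [hydef, this, Finset.sum_empty]; linarith
    have hzS : z ≤ S / 2 := by
      rcases lt_or_ge k d with hkd' | hkd'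
      · have hkk : ¬ T (k+1) ≤ S / 2 := by
          refine Nat.findGreatest_is_greatest (P := fun k => T k ≤ S / 2) (n := d) ?_ (by omega)
          rw [← hk]; exact lt_add_one k
        have hT1 : T (k+1) = x + y := by
          simp only [hT, hxdef, hydef, hs1, hs2]
          rw [← Finset.sum_filter_add_sum_filter_not
            (Finset.univ.filter (fun i : Fin d => (i:ℕ) < k + 1)) (fun i : Fin d => (i:ℕ) < k) b]
          rw [Finset.filter_filter, Finset.filter_filter]
          congr 1
          · refine Finset.sum_congr ?_ (fun _ _ => rfl)
            ext i; simp only [Finset.mem_filter, Finset.mem_univ, true_and]; omega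
          · refine Finset.sum_congr ?_ (fun _ _ => rfl)
            ext i; simp only [Finset.mem_filter, Finset.mem_univ, true_and]; omega
        linarith
      · have : s3 = ∅ := by
          apply Finset.filter_false_of_mem; intro i _
          have := i.isLt; omega
        rw [hzdef, this, Finset.sum_empty]; linarith
    obtain ⟨u, v, w, hu, hv, hw, huvw⟩ :=
      tri x y z hx0 hy0 hz0 (by linarith) (by linarith) (by linarith)
    refine ⟨fun i => if (i:ℕ) < k then u else if (i:ℕ) = k then v else w, ?_, ?_⟩
    · intro i
      dsimp only
      split_ifs <;> assumption
    · rw [hsplit (fun i => (if (i:ℕ) < k then u else if (i:ℕ) = k then v else w) * (b i : ℂ))]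
      have e1 : ∑ i ∈ s1, (if (i:ℕ) < k then u else if (i:ℕ) = k then v else w) * (b i : ℂ)
          = u * (x : ℂ) := by
        rw [hxdef]; push_cast
        rw [Finset.mul_sum]
        apply Finset.sum_congr rfl
        intro i hi
        simp only [hs1, Finset.mem_filter] at hi
        rw [if_pos hi.2]
      have e2 : ∑ i ∈ s2, (if (i:ℕ) < k then u else if (i:ℕ) = k then v else w) * (b i : ℂ)
          = v * (y : ℂ) := by
        rw [hydef]; push_cast
        rw [Finset.mul_sum]
        apply Finset.sum_congr rfl
        intro i hi
        simp only [hs2, Finset.mem_filter] at hi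
        rw [if_neg (by omega), if_pos hi.2]
      have e3 : ∑ i ∈ s3, (if (i:ℕ) < k then u else if (i:ℕ) = k then v else w) * (b i : ℂ)
          = w * (z : ℂ) := by
        rw [hzdef]; push_cast
        rw [Finset.mul_sum]
        apply Finset.sum_congr rfl
        intro i hi
        simp only [hs3, Finset.mem_filter] at hi
        rw [if_neg (by omega), if_neg (by omega)]
      rw [e1, e2, e3, huvw]
  · rintro ⟨φ, hφ, hsum⟩ ⟨i, hi⟩
    have hkey : φ i * (b i : ℂ) = - ∑ j ∈ Finset.univ.erase i, φ j * (b j : ℂ) := by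
      have := Finset.add_sum_erase Finset.univ (fun j => φ j * (b j : ℂ)) (Finset.mem_univ i)
      rw [hsum] at this
      linear_combination this
    have habs : b i = ‖φ i * (b i : ℂ)‖ := by
      rw [norm_mul, hφ i, one_mul, Complex.norm_real, Real.norm_eq_abs, abs_of_pos (hb i)]
    rw [hkey, norm_neg] at habs
    have hle : ‖∑ j ∈ Finset.univ.erase i, φ j * (b j : ℂ)‖
        ≤ ∑ j ∈ Finset.univ.erase i, b j := by
      refine le_trans (norm_sum_le _ _) ?_
      apply Finset.sum_le_sum
      intro j _
      rw [norm_mul, hφ j, one_mul, Complex.norm_real, Real.norm_eq_abs, abs_of_pos (hb j)]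
    linarith
end

section
/- Let f(z_1, z_2) = 1 + z_1 z_2 + z_2^2. A point (a_1, a_2) ∈ ℝ² lies in the amoeba of f (the image of the zero set of f in (ℂ*)² under (z_1,z_2) ↦ (log|z_1|, log|z_2|)) if and only if the list {1, e^{a_1+a_2}, e^{2a_2}} is not lopsided. -/
/-- For f(z₁,z₂) = 1 + z₁z₂ + z₂², a point (a₁,a₂) lies in the amoeba of f iff
the list {1, e^{a₁+a₂}, e^{2a₂}} is not lopsided. -/
theorem stmt2 (a₁ a₂ : ℝ) :
    (∃ z₁ z₂ : ℂ, z₁ ≠ 0 ∧ z₂ ≠ 0 ∧ 1 + z₁ * z₂ + z₂ ^ 2 = 0 ∧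
      Real.log ‖z₁‖ = a₁ ∧ Real.log ‖z₂‖ = a₂) ↔
    ¬ (1 > Real.exp (a₁ + a₂) + Real.exp (2 * a₂) ∨
       Real.exp (a₁ + a₂) > 1 + Real.exp (2 * a₂) ∨
       Real.exp (2 * a₂) > 1 + Real.exp (a₁ + a₂)) := by
  constructor
  · rintro ⟨z₁, z₂, hz₁, hz₂, heq, ha₁, ha₂⟩
    have h1 : ‖z₁‖ = Real.exp a₁ := by
      rw [← ha₁, Real.exp_log (norm_pos_iff.mpr hz₁)]
    have h2 : ‖z₂‖ = Real.exp a₂ := by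
      rw [← ha₂, Real.exp_log (norm_pos_iff.mpr hz₂)]
    have habs1 : ‖z₁ * z₂‖ = Real.exp (a₁ + a₂) := by
      rw [norm_mul, h1, h2, ← Real.exp_add]
    have habs2 : ‖z₂ ^ 2‖ = Real.exp (2 * a₂) := by
      rw [norm_pow, h2, ← Real.exp_nat_mul]; norm_num
    have e1 : z₁ * z₂ + z₂ ^ 2 = -1 := by linear_combination heq
    have e2 : z₁ * z₂ = -(1 + z₂ ^ 2) := by linear_combination heq
    have e3 : z₂ ^ 2 = -(1 + z₁ * z₂) := by linear_combination heq
    have t1 : (1:ℝ) ≤ Real.exp (a₁ + a₂) + Real.exp (2 * a₂) := by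
      have := norm_add_le (z₁ * z₂) (z₂ ^ 2)
      rw [e1, habs1, habs2] at this
      simpa using this
    have t2 : Real.exp (a₁ + a₂) ≤ 1 + Real.exp (2 * a₂) := by
      have h := norm_add_le (1 : ℂ) (z₂ ^ 2)
      have h' : ‖z₁ * z₂‖ = ‖1 + z₂ ^ 2‖ := by
        rw [e2, norm_neg]
      rw [← h', habs1, habs2] at h
      simpa using h
    have t3 : Real.exp (2 * a₂) ≤ 1 + Real.exp (a₁ + a₂) := by
      have h := norm_add_le (1 : ℂ) (z₁ * z₂)
      have h' : ‖z₂ ^ 2‖ = ‖1 + z₁ * z₂‖ := by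
        rw [e3, norm_neg]
      rw [← h', habs1, habs2] at h
      simpa using h
    rintro (h | h | h) <;> linarith
  · intro h
    push_neg at h
    obtain ⟨h1, h2, h3⟩ := h
    set r := Real.exp (a₁ + a₂) with hr
    set s := Real.exp (2 * a₂) with hs
    have hr0 : 0 < r := Real.exp_pos _
    have hs0 : 0 < s := Real.exp_pos _
    set c : ℝ := (r ^ 2 - 1 - s ^ 2) / (2 * s) with hc
    have hc1 : -1 ≤ c := by
      rw [hc, le_div_iff₀ (by positivity)]
      nlinarith
    have hc2 : c ≤ 1 := by
      rw [hc, div_le_one (by positivity)]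
      nlinarith
    have hcos : Real.cos (Real.arccos c) = c := Real.cos_arccos hc1 hc2
    set t := Real.arccos c with ht
    set z₂ : ℂ := (Real.exp a₂ : ℂ) * Complex.exp (↑(t / 2) * Complex.I) with hz2def
    have hz₂ : z₂ ≠ 0 := by
      apply mul_ne_zero
      · exact_mod_cast Real.exp_ne_zero a₂
      · exact Complex.exp_ne_zero _
    have habsz₂ : ‖z₂‖ = Real.exp a₂ := by
      rw [hz2def, norm_mul, Complex.norm_exp]
      simp [Complex.norm_of_nonneg (Real.exp_pos a₂).le]
    have hz₂sq : z₂ ^ 2 = (s : ℂ) * ((Real.cos t : ℂ) + (Real.sin t : ℂ) * Complex.I) := by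
      rw [hz2def, mul_pow, ← Complex.exp_nat_mul]
      have : ((2 : ℕ) : ℂ) * (↑(t / 2) * Complex.I) = (t : ℂ) * Complex.I := by
        push_cast; ring
      rw [this, Complex.exp_mul_I]
      have h2 : ((Real.exp a₂ : ℂ)) ^ 2 = (s : ℂ) := by
        rw [hs, two_mul, Real.exp_add]
        push_cast
        ring
      rw [h2, ← Complex.ofReal_cos, ← Complex.ofReal_sin]
    have hre : ((1 : ℂ) + z₂ ^ 2).re = 1 + s * Real.cos t := by
      simp [hz₂sq, Complex.cos_ofReal_re]
    have him : ((1 : ℂ) + z₂ ^ 2).im = s * Real.sin t := by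
      simp [hz₂sq, Complex.sin_ofReal_re]
    have habs1z : ‖1 + z₂ ^ 2‖ = r := by
      have hsq : ‖1 + z₂ ^ 2‖ ^ 2 = r ^ 2 := by
        rw [Complex.sq_norm, Complex.normSq_apply, hre, him, hcos]
        have hsc : Real.sin t ^ 2 = 1 - c ^ 2 := by
          have := Real.sin_sq_add_cos_sq t
          rw [hcos] at this
          linarith
        have h2sc : 2 * s * c = r ^ 2 - 1 - s ^ 2 := by
          rw [hc]
          field_simp
        linear_combination (s ^ 2) * hsc + h2sc
      rw [← Real.sqrt_sq (norm_nonneg (1 + z₂ ^ 2)), hsq, Real.sqrt_sq hr0.le]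
    have hne : (1 : ℂ) + z₂ ^ 2 ≠ 0 := by
      intro hh
      rw [hh, norm_zero] at habs1z
      linarith
    refine ⟨-(1 + z₂ ^ 2) / z₂, z₂, ?_, hz₂, ?_, ?_, ?_⟩
    · exact div_ne_zero (neg_ne_zero.mpr hne) hz₂
    · field_simp
      ring
    · rw [norm_div, norm_neg, habs1z, habsz₂, hr, ← Real.exp_sub,
        Real.log_exp]
      ring
    · rw [habsz₂, Real.log_exp]
end

section
/- Let I be an ideal of the Laurent polynomial ring ℂ[z_1^{±1}, ..., z_r^{±1}] generated by f_1, ..., f_k, with variety V ⊂ (ℂ*)^r. For every a ∈ ℝ^r there exists f_a ∈ I such that the zero set of f_a intersected with the torus Log^{-1}(a) equals V ∩ Log^{-1}(a). Explicitly, f_a(z) = ∑_{i=1}^k f_i(z_1,...,z_r) · f̄_i(e^{2a_1} z_1^{-1}, ..., e^{2a_r} z_r^{-1}) works, where f̄_i denotes the Laurent polynomial with complex-conjugated coefficients. -/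
/-- Evaluation of a Laurent polynomial at a point of (ℂ*)^r. -/
noncomputable def lEval {r : ℕ} (z : Fin r → ℂ) (f : AddMonoidAlgebra ℂ (Fin r → ℤ)) : ℂ :=
  f.coeff.sum fun j c => c * ∏ i, z i ^ j i

/-- The Laurent polynomial f̄(e^{2a₁}z₁⁻¹, ..., e^{2a_r}z_r⁻¹), where f̄ has
complex-conjugated coefficients. -/
noncomputable def conjFlip {r : ℕ} (a : Fin r → ℝ) (f : AddMonoidAlgebra ℂ (Fin r → ℤ)) :
    AddMonoidAlgebra ℂ (Fin r → ℤ) :=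
  f.coeff.sum fun J c => AddMonoidAlgebra.single (-J) ((starRingEnd ℂ) c * ∏ i, (Real.exp (2 * a i) : ℂ) ^ J i)

/-- Evaluation as an algebra homomorphism, given nonvanishing coordinates. -/
noncomputable def evalHom {r : ℕ} (z : Fin r → ℂ) (hz : ∀ i, z i ≠ 0) :
    AddMonoidAlgebra ℂ (Fin r → ℤ) →ₐ[ℂ] ℂ :=
  AddMonoidAlgebra.lift ℂ ℂ (Fin r → ℤ)
    { toFun := fun j => ∏ i, z i ^ (Multiplicative.toAdd j i)
      map_one' := by simp
      map_mul' := fun j j' => by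
        simp only [toAdd_mul, Pi.add_apply]
        rw [← Finset.prod_mul_distrib]
        exact Finset.prod_congr rfl fun i _ => zpow_add₀ (hz i) _ _ }

lemma lEval_eq {r : ℕ} (z : Fin r → ℂ) (hz : ∀ i, z i ≠ 0)
    (f : AddMonoidAlgebra ℂ (Fin r → ℤ)) : lEval z f = evalHom z hz f := by
  rw [evalHom, AddMonoidAlgebra.lift_apply]
  rfl

lemma conj_eq {z : ℂ} {a : ℝ} (hz : z ≠ 0) (ha : Real.log ‖z‖ = a) :
    (starRingEnd ℂ) z = (Real.exp (2 * a) : ℂ) * z⁻¹ := by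
  have habs : ‖z‖ = Real.exp a := by
    rw [← ha, Real.exp_log (by simpa using hz)]
  have key : z * (starRingEnd ℂ) z = (Real.exp (2 * a) : ℂ) := by
    rw [Complex.mul_conj, Complex.normSq_eq_norm_sq, habs, two_mul, Real.exp_add]
    push_cast
    ring
  rw [← key]
  field_simp

lemma evalHom_conjFlip {r : ℕ} (z : Fin r → ℂ) (hz : ∀ i, z i ≠ 0) (a : Fin r → ℝ)
    (ha : ∀ i, Real.log ‖z i‖ = a i) (f : AddMonoidAlgebra ℂ (Fin r → ℤ)) :
    evalHom z hz (conjFlip a f) = (starRingEnd ℂ) (evalHom z hz f) := by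
  rw [← lEval_eq z hz f, lEval, map_finsuppSum, conjFlip, map_finsuppSum]
  refine Finsupp.sum_congr fun J _ => ?_
  rw [evalHom, AddMonoidAlgebra.lift_single]
  simp only [map_mul, map_prod, smul_eq_mul]
  rw [mul_assoc]
  congr 1
  simp only [MonoidHom.coe_mk, OneHom.coe_mk, toAdd_ofAdd]
  rw [← Finset.prod_mul_distrib]
  refine Finset.prod_congr rfl fun i _ => ?_
  show (Real.exp (2 * a i) : ℂ) ^ J i * z i ^ (-J) i = (starRingEnd ℂ) (z i ^ J i)
  rw [map_zpow₀, conj_eq (hz i) (ha i), mul_zpow, Pi.neg_apply, zpow_neg, ← inv_zpow]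

/-- The explicit element f_a = ∑ᵢ fᵢ · f̄ᵢ(e^{2a}z⁻¹) of the ideal generated by the fᵢ
vanishes on the torus Log⁻¹(a) exactly where all the fᵢ do. -/
theorem stmt6 (r k : ℕ) (f : Fin k → AddMonoidAlgebra ℂ (Fin r → ℤ)) (a : Fin r → ℝ) :
    (∑ i, f i * conjFlip a (f i)) ∈ Ideal.span (Set.range f) ∧
    ∀ z : Fin r → ℂ, (∀ i, z i ≠ 0) → (∀ i, Real.log ‖z i‖ = a i) →
      (lEval z (∑ i, f i * conjFlip a (f i)) = 0 ↔ ∀ i, lEval z (f i) = 0) := by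
  constructor
  · exact Ideal.sum_mem _ fun i _ =>
      Ideal.mul_mem_right _ _ (Ideal.subset_span ⟨i, rfl⟩)
  · intro z hz ha
    simp only [lEval_eq z hz]
    rw [map_sum]
    have : ∀ i : Fin k, evalHom z hz (f i * conjFlip a (f i))
        = (Complex.normSq (evalHom z hz (f i)) : ℂ) := by
      intro i
      rw [map_mul, evalHom_conjFlip z hz a ha, Complex.mul_conj]
    rw [Finset.sum_congr rfl fun i _ => this i, ← Complex.ofReal_sum,
      Complex.ofReal_eq_zero]
    rw [Finset.sum_eq_zero_iff_of_nonneg fun i _ => Complex.normSq_nonneg _]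
    simp [Complex.normSq_eq_zero]
end

section
/- Let I ⊂ ℂ[z_1^{±1}, ..., z_r^{±1}] be a finitely generated ideal with variety V ⊂ (ℂ*)^r. Then the amoeba of V equals the intersection over all f ∈ I of the amoebas of the hypersurfaces Z_f: Log(V) = ⋂_{f ∈ I} Log(Z_f). -/
/-- The monomial evaluation monoid hom. -/
noncomputable def monHom {r : ℕ} (z : Fin r → ℂ) (hz : ∀ i, z i ≠ 0) :
    Multiplicative (Fin r → ℤ) →* ℂ where
  toFun j := ∏ i, z i ^ (Multiplicative.toAdd j i)
  map_one' := by simp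
  map_mul' j j' := by
    show (∏ i, z i ^ (Multiplicative.toAdd (j * j') i)) = _
    trans ∏ i, (z i ^ Multiplicative.toAdd j i * z i ^ Multiplicative.toAdd j' i)
    · exact Finset.prod_congr rfl fun i _ => zpow_add₀ (hz i) _ _
    · exact Finset.prod_mul_distrib

/-- Evaluation as an algebra hom. -/
noncomputable def lHom {r : ℕ} (z : Fin r → ℂ) (hz : ∀ i, z i ≠ 0) :
    AddMonoidAlgebra ℂ (Fin r → ℤ) →ₐ[ℂ] ℂ :=
  AddMonoidAlgebra.lift ℂ ℂ (Fin r → ℤ) (monHom z hz)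

lemma lHom_eq {r : ℕ} (z : Fin r → ℂ) (hz : ∀ i, z i ≠ 0)
    (g : AddMonoidAlgebra ℂ (Fin r → ℤ)) : lHom z hz g = lEval z g := by
  rw [lHom, AddMonoidAlgebra.lift_apply]
  refine Finsupp.sum_congr fun j _ => ?_
  simp [monHom, smul_eq_mul]

lemma lEval_single {r : ℕ} (z : Fin r → ℂ) (j : Fin r → ℤ) (c : ℂ) :
    lEval z (AddMonoidAlgebra.single j c) = c * ∏ i, z i ^ j i := by
  rw [lEval, AddMonoidAlgebra.coeff_single, Finsupp.sum_single_index]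
  simp

/-- The conjugate-reflected Laurent polynomial. -/
noncomputable def lBar {r : ℕ} (a : Fin r → ℝ) (g : AddMonoidAlgebra ℂ (Fin r → ℤ)) :
    AddMonoidAlgebra ℂ (Fin r → ℤ) :=
  g.coeff.sum fun j c => AddMonoidAlgebra.single (-j)
    ((starRingEnd ℂ) c * Complex.exp (∑ i, 2 * (a i : ℂ) * (j i : ℂ)))

lemma lEval_lBar {r : ℕ} (a : Fin r → ℝ) (z : Fin r → ℂ) (hz : ∀ i, z i ≠ 0)
    (habs : ∀ i, (‖z i‖ : ℂ) = Complex.exp (a i))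
    (g : AddMonoidAlgebra ℂ (Fin r → ℤ)) :
    lEval z (lBar a g) = (starRingEnd ℂ) (lEval z g) := by
  have hconj : ∀ i, (starRingEnd ℂ) (z i) = Complex.exp (2 * (a i : ℂ)) * (z i)⁻¹ := by
    intro i
    have h1 : z i * (starRingEnd ℂ) (z i) = Complex.exp (2 * (a i : ℂ)) := by
      rw [Complex.mul_conj]
      have : (Complex.normSq (z i) : ℂ) = (‖z i‖ : ℂ) ^ 2 := by
        rw [Complex.normSq_eq_norm_sq]; push_cast; ring
      rw [this, habs i, sq, ← Complex.exp_add]; ring_nf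
    field_simp [hz i]
    linear_combination h1
  rw [← lHom_eq z hz, lBar, map_finsuppSum, lEval]
  rw [map_finsuppSum]
  refine Finsupp.sum_congr fun j _ => ?_
  rw [lHom_eq z hz, lEval_single, map_mul, map_prod]
  have : ∀ i, (starRingEnd ℂ) (z i ^ j i) = Complex.exp (2 * (a i : ℂ) * (j i : ℂ)) * z i ^ (-j i) := by
    intro i
    rw [map_zpow₀, hconj i, mul_zpow, ← Complex.exp_int_mul, zpow_neg, inv_zpow]
    ring_nf
  simp only [this]
  rw [Finset.prod_mul_distrib, ← Complex.exp_sum]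
  have hsum : ∑ x, ((a x : ℂ) * (j x : ℂ) * 2) = ∑ x, 2 * (a x : ℂ) * (j x : ℂ) :=
    Finset.sum_congr rfl fun x _ => by ring
  have hsum2 : ∑ x, (2 * (a x : ℂ) * (j x : ℂ)) = ∑ x, ((a x : ℂ) * (j x : ℂ) * 2) :=
    Finset.sum_congr rfl fun x _ => by ring
  simp only [Pi.neg_apply]
  rw [hsum2]
  ring

/-- The amoeba of the variety of a finitely generated ideal I equals the intersection of
the amoebas of the hypersurfaces Z_f over all f ∈ I. -/
theorem stmt7 (r k : ℕ) (f : Fin k → AddMonoidAlgebra ℂ (Fin r → ℤ)) :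
    {a : Fin r → ℝ | ∃ z : Fin r → ℂ, (∀ i, z i ≠ 0) ∧ (∀ i, lEval z (f i) = 0) ∧
        ∀ i, Real.log ‖z i‖ = a i} =
    ⋂ g ∈ Ideal.span (Set.range f),
      {a : Fin r → ℝ | ∃ z : Fin r → ℂ, (∀ i, z i ≠ 0) ∧ lEval z g = 0 ∧
        ∀ i, Real.log ‖z i‖ = a i} := by
  ext a
  simp only [Set.mem_setOf_eq, Set.mem_iInter]
  constructor
  · rintro ⟨z, hz, hf, hlog⟩ g hg
    refine ⟨z, hz, ?_, hlog⟩
    have key : ∀ x ∈ Ideal.span (Set.range f), lEval z x = 0 := by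
      intro x hx
      refine Submodule.span_induction ?_ ?_ ?_ ?_ hx
      · rintro x ⟨i, rfl⟩; exact hf i
      · rw [← lHom_eq z hz, map_zero]
      · intro x y _ _ px py
        rw [← lHom_eq z hz, map_add, lHom_eq z hz, lHom_eq z hz, px, py, add_zero]
      · intro c x _ px
        rw [smul_eq_mul, ← lHom_eq z hz, map_mul, lHom_eq z hz x, px, mul_zero]
    exact key g hg
  · intro h
    set S : AddMonoidAlgebra ℂ (Fin r → ℤ) := ∑ i, f i * lBar a (f i) with hS
    have hSmem : S ∈ Ideal.span (Set.range f) := by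
      refine Ideal.sum_mem _ fun i _ => ?_
      exact Ideal.mul_mem_right _ _ (Ideal.subset_span ⟨i, rfl⟩)
    obtain ⟨z, hz, hSz, hlog⟩ := h S hSmem
    refine ⟨z, hz, ?_, hlog⟩
    have habs : ∀ i, (‖z i‖ : ℂ) = Complex.exp (a i) := by
      intro i
      have hpos : 0 < ‖z i‖ := by
        simpa [norm_pos_iff] using hz i
      rw [← hlog i, ← Complex.ofReal_exp, Real.exp_log hpos]
    have hval : lEval z S = ∑ i, (Complex.normSq (lEval z (f i)) : ℂ) := by
      rw [hS, ← lHom_eq z hz, map_sum]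
      refine Finset.sum_congr rfl fun i _ => ?_
      rw [map_mul, lHom_eq z hz, lHom_eq z hz, lEval_lBar a z hz habs, Complex.mul_conj]
    rw [hval] at hSz
    have hreal : ∑ i, Complex.normSq (lEval z (f i)) = 0 := by
      exact_mod_cast hSz
    intro i
    have := (Finset.sum_eq_zero_iff_of_nonneg
      (fun i _ => Complex.normSq_nonneg (lEval z (f i)))).mp hreal i (Finset.mem_univ i)
    exact Complex.normSq_eq_zero.mp this
end
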